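/- Suppose φ : 𝔹_d → B(U,Y) and ψ : 𝔹_d → B(V,W) satisfy: there exist a Hilbert space M and unitaries α̂ : U ⊕ M → V, β : Y → W with β φ_M(z) = ψ(z) α̂ for all z (where φ_M(z)(u ⊕ m) = φ(z)u), and dim U⁰_φ = dim V⁰_ψ. Then φ coincides with ψ, i.e. there exist unitaries α : U → V, β : Y → W with β φ(z) = ψ(z) α for all z ∈ 𝔹_d. -/

import Mathlib

open Metric

theorem orthogonalProjection_add_orthogonalProjection_orthogonal {𝕜 E : Type*} [RCLike 𝕜]
    [NormedAddCommGroup E] [InnerProductSpace 𝕜 E] (K : Submodule 𝕜 E)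
    [K.HasOrthogonalProjection] (w : E) :
    (K.orthogonalProjectionOnto w : E) + (Kᗮ.orthogonalProjectionOnto w : E) = w :=
  K.starProjection_add_starProjection_orthogonal w

theorem WithLp.equiv_symm_add {p : ENNReal} {V : Type*} [AddCommGroup V] (x y : V) :
    (WithLp.equiv p V).symm (x + y) = (WithLp.equiv p V).symm x + (WithLp.equiv p V).symm y :=
  rfl

theorem WithLp.equiv_symm_smul {p : ENNReal} {K V : Type*} [SMul K V] (c : K) (x : V) :
    (WithLp.equiv p V).symm (c • x) = c • (WithLp.equiv p V).symm x :=
  rfl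

theorem WithLp.norm_equiv_symm_fst (p : ENNReal) [Fact (1 ≤ p)] {α β : Type*}
    [SeminormedAddCommGroup α] [SeminormedAddCommGroup β] (x : α) :
    ‖(WithLp.equiv p (α × β)).symm (x, 0)‖ = ‖x‖ :=
  WithLp.norm_toLp_fst p α β x

/-- suppose there are a Hilbert space M and unitaries α̂ : U ⊕ M → V,
β : Y → W with β φ_M(z) = ψ(z) α̂ on the ball (φ_M(z)(u ⊕ m) = φ(z)u), and suppose
dim U⁰_φ = dim V⁰_ψ (there is a unitary between the common kernels). Then φ coincides
with ψ: there exist unitaries α : U → V, β' : Y → W with β' φ(z) = ψ(z) α on the ball. -/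
theorem coincidence_from_extended_coincidence
    {d : ℕ} {U Y V W M : Type*}
    [NormedAddCommGroup U] [InnerProductSpace ℂ U] [CompleteSpace U]
    [NormedAddCommGroup Y] [InnerProductSpace ℂ Y] [CompleteSpace Y]
    [NormedAddCommGroup V] [InnerProductSpace ℂ V] [CompleteSpace V]
    [NormedAddCommGroup W] [InnerProductSpace ℂ W] [CompleteSpace W]
    [NormedAddCommGroup M] [InnerProductSpace ℂ M] [CompleteSpace M]
    (φ : EuclideanSpace ℂ (Fin d) → (U →L[ℂ] Y))
    (ψ : EuclideanSpace ℂ (Fin d) → (V →L[ℂ] W))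
    (αhat : WithLp 2 (U × M) ≃ₗᵢ[ℂ] V) (β : Y ≃ₗᵢ[ℂ] W)
    (hco : ∀ z ∈ ball (0 : EuclideanSpace ℂ (Fin d)) 1, ∀ (u : U) (m : M),
        β (φ z u) = ψ z (αhat ((WithLp.equiv 2 (U × M)).symm (u, m))))
    (hdim : Nonempty
      ((⨅ z ∈ ball (0 : EuclideanSpace ℂ (Fin d)) 1, LinearMap.ker (φ z : U →ₗ[ℂ] Y) :
          Submodule ℂ U) ≃ₗᵢ[ℂ]
       (⨅ z ∈ ball (0 : EuclideanSpace ℂ (Fin d)) 1, LinearMap.ker (ψ z : V →ₗ[ℂ] W) :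
          Submodule ℂ V))) :
    ∃ (α : U ≃ₗᵢ[ℂ] V) (β' : Y ≃ₗᵢ[ℂ] W),
      ∀ z ∈ ball (0 : EuclideanSpace ℂ (Fin d)) 1, ∀ u : U,
        β' (φ z u) = ψ z (α u) := by
  obtain ⟨τ⟩ := hdim
  set B := ball (0 : EuclideanSpace ℂ (Fin d)) 1 with hB
  set K : Submodule ℂ U := ⨅ z ∈ B, LinearMap.ker (φ z : U →ₗ[ℂ] Y) with hKdef
  set L : Submodule ℂ V := ⨅ z ∈ B, LinearMap.ker (ψ z : V →ₗ[ℂ] W) with hLdef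
  have hKmem : ∀ u : U, u ∈ K ↔ ∀ z ∈ B, φ z u = 0 := by
    intro u; simp [hKdef, Submodule.mem_iInf, LinearMap.mem_ker]
  have hLmem : ∀ v : V, v ∈ L ↔ ∀ z ∈ B, ψ z v = 0 := by
    intro v; simp [hLdef, Submodule.mem_iInf, LinearMap.mem_ker]
  haveI : CompleteSpace K := by
    have hcl : IsClosed (K : Set U) := by
      have : (K : Set U) = ⋂ z ∈ B, (φ z) ⁻¹' {0} := by
        ext u; simp [hKmem u]
      rw [this]
      exact isClosed_biInter fun z _ => isClosed_singleton.preimage (φ z).continuous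
    exact hcl.completeSpace_coe
  haveI : CompleteSpace L := by
    have hcl : IsClosed (L : Set V) := by
      have : (L : Set V) = ⋂ z ∈ B, (ψ z) ⁻¹' {0} := by
        ext v; simp [hLmem v]
      rw [this]
      exact isClosed_biInter fun z _ => isClosed_singleton.preimage (ψ z).continuous
    exact hcl.completeSpace_coe
  -- αhat maps K × M into L
  have hαK : ∀ (u : U) (m : M), u ∈ K →
      αhat ((WithLp.equiv 2 (U × M)).symm (u, m)) ∈ L := by
    intro u m hu
    rw [hLmem]
    intro z hz
    rw [← hco z hz u m, (hKmem u).1 hu z hz, map_zero]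
  -- αhat⁻¹ maps L into K × M (first component in K)
  have hαinv : ∀ v : V, v ∈ L → (αhat.symm v).fst ∈ K := by
    intro v hv
    rw [hKmem]
    intro z hz
    have h1 : β (φ z (αhat.symm v).fst) = ψ z (αhat ((WithLp.equiv 2 (U × M)).symm
        ((αhat.symm v).fst, (αhat.symm v).snd))) := hco z hz _ _
    have h2 : (WithLp.equiv 2 (U × M)).symm ((αhat.symm v).fst, (αhat.symm v).snd)
        = αhat.symm v := rfl
    rw [h2, αhat.apply_symm_apply] at h1
    have h3 : ψ z v = 0 := (hLmem v).1 hv z hz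
    rw [h3] at h1
    have := β.injective (by rw [h1, map_zero] : β (φ z (αhat.symm v).fst) = β 0)
    exact this
  -- αhat maps Kᗮ × 0 into Lᗮ
  have hαKperp : ∀ u : U, u ∈ Kᗮ →
      αhat ((WithLp.equiv 2 (U × M)).symm (u, 0)) ∈ Lᗮ := by
    intro u hu
    rw [Submodule.mem_orthogonal]
    intro v hv
    have hx : αhat (αhat.symm v) = v := αhat.apply_symm_apply v
    rw [← hx, αhat.inner_map_map]
    have : inner (𝕜 := ℂ) (αhat.symm v) ((WithLp.equiv 2 (U × M)).symm (u, 0))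
        = inner (𝕜 := ℂ) (αhat.symm v).fst u + inner (𝕜 := ℂ) (αhat.symm v).snd (0 : M) := rfl
    rw [this, inner_zero_right, add_zero]
    exact hu _ (hαinv v hv)
  -- the candidate linear map
  let f : U →ₗ[ℂ] V :=
    { toFun := fun u => αhat ((WithLp.equiv 2 (U × M)).symm
        (((Submodule.orthogonalProjectionOnto Kᗮ) u : U), 0)) + ((τ ((Submodule.orthogonalProjectionOnto K) u) : L) : V)
      map_add' := by
        intro a b
        simp only [map_add, Submodule.coe_add]
        rw [show ((((Submodule.orthogonalProjectionOnto Kᗮ) a : U) + ((Submodule.orthogonalProjectionOnto Kᗮ) b : U),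
            (0 : M)) = (((Submodule.orthogonalProjectionOnto Kᗮ) a : U), (0:M)) +
            (((Submodule.orthogonalProjectionOnto Kᗮ) b : U), (0:M))) from by simp,
          WithLp.equiv_symm_add, map_add]

        abel
      map_smul' := by
        intro c a
        simp only [map_smul, RingHom.id_apply, Submodule.coe_smul, smul_add]
        rw [show ((c • ((Submodule.orthogonalProjectionOnto Kᗮ) a : U), (0 : M)) =
            c • (((Submodule.orthogonalProjectionOnto Kᗮ) a : U), (0:M))) from by simp,
          WithLp.equiv_symm_smul, map_smul] }
  have hf : ∀ u : U, f u = αhat ((WithLp.equiv 2 (U × M)).symm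
      (((Submodule.orthogonalProjectionOnto Kᗮ) u : U), 0)) + ((τ ((Submodule.orthogonalProjectionOnto K) u) : L) : V) :=
    fun _ => rfl
  -- f is norm-preserving
  have hnorm : ∀ u : U, ‖f u‖ = ‖u‖ := by
    intro u
    have h1 : αhat ((WithLp.equiv 2 (U × M)).symm (((Submodule.orthogonalProjectionOnto Kᗮ) u : U), 0)) ∈ Lᗮ :=
      hαKperp _ (Submodule.coe_mem _)
    have h2 : ((τ ((Submodule.orthogonalProjectionOnto K) u) : L) : V) ∈ L := Submodule.coe_mem _
    have horth : inner (𝕜 := ℂ) (((τ ((Submodule.orthogonalProjectionOnto K) u) : L) : V))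
        (αhat ((WithLp.equiv 2 (U × M)).symm (((Submodule.orthogonalProjectionOnto Kᗮ) u : U), 0))) = 0 :=
      h1 _ h2
    have hsq : ‖f u‖ * ‖f u‖ = ‖u‖ * ‖u‖ := by
      rw [hf, add_comm, norm_add_sq_eq_norm_sq_add_norm_sq_of_inner_eq_zero _ _ horth]
      have e1 : ‖((τ ((Submodule.orthogonalProjectionOnto K) u) : L) : V)‖ =
          ‖((Submodule.orthogonalProjectionOnto K) u : U)‖ := by
        rw [show ‖((τ ((Submodule.orthogonalProjectionOnto K) u) : L) : V)‖ =
            ‖τ ((Submodule.orthogonalProjectionOnto K) u)‖ from rfl, τ.norm_map]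
        rfl
      have e2 : ‖αhat ((WithLp.equiv 2 (U × M)).symm (((Submodule.orthogonalProjectionOnto Kᗮ) u : U), 0))‖ =
          ‖((Submodule.orthogonalProjectionOnto Kᗮ) u : U)‖ := by
        rw [αhat.norm_map, WithLp.norm_equiv_symm_fst]
      rw [e1, e2]
      have hdec : ((Submodule.orthogonalProjectionOnto K) u : U) + ((Submodule.orthogonalProjectionOnto Kᗮ) u : U) = u :=
        orthogonalProjection_add_orthogonalProjection_orthogonal K u
      have horth2 : inner (𝕜 := ℂ) ((Submodule.orthogonalProjectionOnto K) u : U)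
          ((Submodule.orthogonalProjectionOnto Kᗮ) u : U) = 0 :=
        (Submodule.coe_mem ((Submodule.orthogonalProjectionOnto Kᗮ) u)) _ (Submodule.coe_mem _)
      have hr : ‖u‖ * ‖u‖ = ‖((Submodule.orthogonalProjectionOnto K) u : U)‖ * ‖((Submodule.orthogonalProjectionOnto K) u : U)‖
          + ‖((Submodule.orthogonalProjectionOnto Kᗮ) u : U)‖ * ‖((Submodule.orthogonalProjectionOnto Kᗮ) u : U)‖ := by
        conv_lhs => rw [← hdec]
        exact norm_add_sq_eq_norm_sq_add_norm_sq_of_inner_eq_zero _ _ horth2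
      rw [hr]
    exact (mul_self_inj (norm_nonneg _) (norm_nonneg _)).mp hsq
  let F : U →ₗᵢ[ℂ] V := ⟨f, hnorm⟩
  -- F is surjective
  have hsurj : Function.Surjective F := by
    intro v
    set v₀ : V := ((Submodule.orthogonalProjectionOnto L) v : V) with hv₀
    set v₁ : V := ((Submodule.orthogonalProjectionOnto Lᗮ) v : V) with hv₁
    have hdecv : v₀ + v₁ = v := orthogonalProjection_add_orthogonalProjection_orthogonal L v
    set k : K := τ.symm ((Submodule.orthogonalProjectionOnto L) v) with hk
    set x : WithLp 2 (U × M) := αhat.symm v₁ with hx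
    -- decompose x.fst
    set a : V := αhat ((WithLp.equiv 2 (U × M)).symm
        (((Submodule.orthogonalProjectionOnto K) x.fst : U), x.snd)) with ha
    set b : V := αhat ((WithLp.equiv 2 (U × M)).symm
        (((Submodule.orthogonalProjectionOnto Kᗮ) x.fst : U), 0)) with hb
    have haL : a ∈ L := hαK _ _ (Submodule.coe_mem _)
    have hbLperp : b ∈ Lᗮ := hαKperp _ (Submodule.coe_mem _)
    have hab : a + b = v₁ := by
      rw [ha, hb, ← map_add, ← WithLp.equiv_symm_add]
      have : ((((Submodule.orthogonalProjectionOnto K) x.fst : U), x.snd) +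
          (((Submodule.orthogonalProjectionOnto Kᗮ) x.fst : U), (0 : M))) = (x.fst, x.snd) := by
        rw [Prod.mk_add_mk, add_zero,
          orthogonalProjection_add_orthogonalProjection_orthogonal K x.fst]
      rw [this]
      have : (WithLp.equiv 2 (U × M)).symm (x.fst, x.snd) = x := rfl
      rw [this, hx, αhat.apply_symm_apply]
    have ha0 : a = 0 := by
      have haperp : a ∈ Lᗮ := by
        have : a = v₁ - b := by rw [← hab]; abel
        rw [this]
        exact Submodule.sub_mem _ (Submodule.coe_mem _) hbLperp
      have := (Submodule.orthogonal_disjoint L).le_bot ⟨haL, haperp⟩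
      simpa using this
    have hbv₁ : b = v₁ := by rw [← hab, ha0, zero_add]
    -- preimage
    refine ⟨((Submodule.orthogonalProjectionOnto Kᗮ) x.fst : U) + (k : U), ?_⟩
    have hFw : F (((Submodule.orthogonalProjectionOnto Kᗮ) x.fst : U) + (k : U)) =
        αhat ((WithLp.equiv 2 (U × M)).symm
          (((Submodule.orthogonalProjectionOnto Kᗮ)
            (((Submodule.orthogonalProjectionOnto Kᗮ) x.fst : U) + (k : U)) : U), 0)) +
        ((τ ((Submodule.orthogonalProjectionOnto K)
            (((Submodule.orthogonalProjectionOnto Kᗮ) x.fst : U) + (k : U))) : L) : V) := rfl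
    have hP : (Submodule.orthogonalProjectionOnto K) (((Submodule.orthogonalProjectionOnto Kᗮ) x.fst : U) + (k : U)) = k := by
      rw [map_add, Submodule.orthogonalProjectionOnto_apply_of_mem_orthogonal
        (Submodule.coe_mem _), zero_add, Submodule.orthogonalProjectionOnto_mem_subspace_eq_self k]
    have hQ : (Submodule.orthogonalProjectionOnto Kᗮ) (((Submodule.orthogonalProjectionOnto Kᗮ) x.fst : U) + (k : U)) =
        (Submodule.orthogonalProjectionOnto Kᗮ) x.fst := by
      rw [map_add, Submodule.orthogonalProjectionOnto_mem_subspace_eq_self ((Submodule.orthogonalProjectionOnto Kᗮ) x.fst),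
        Submodule.orthogonalProjectionOnto_apply_of_mem_orthogonal
          (K.le_orthogonal_orthogonal (Submodule.coe_mem k)), add_zero]
    rw [hFw, hP, hQ, ← hb, hbv₁, hk, τ.apply_symm_apply, ← hv₀, add_comm, hdecv]
  refine ⟨LinearIsometryEquiv.ofSurjective F hsurj, β, ?_⟩
  intro z hz u
  have hα : (LinearIsometryEquiv.ofSurjective F hsurj) u = f u := rfl
  rw [hα, hf, map_add]
  have hψτ : ψ z ((τ ((Submodule.orthogonalProjectionOnto K) u) : L) : V) = 0 :=
    (hLmem _).1 (Submodule.coe_mem _) z hz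
  rw [hψτ, add_zero, ← hco z hz _ 0]
  congr 1
  have : ((Submodule.orthogonalProjectionOnto Kᗮ) u : U) = u - ((Submodule.orthogonalProjectionOnto K) u : U) := by
    have := orthogonalProjection_add_orthogonalProjection_orthogonal K u
    linear_combination (norm := abel) this
  rw [this, map_sub, (hKmem _).1 (Submodule.coe_mem _) z hz, sub_zero]
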